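/- For every ε with 0 < ε ≤ 1/49 and every a ∈ M_ε, there exists x ∈ M_ε ∩ [0,1] with x ≠ a such that (a + x)/2 ∈ M_ε; in particular, every point of the middle-ε Cantor set M_ε is contained in a three-term arithmetic progression lying in M_ε. -/

import Mathlib

/-- The middle-`ε` Cantor set. -/
noncomputable def middleCantor (ε : ℝ) : Set ℝ :=
  {x | ∃ b : ℕ → Bool,
    x = (1 - (1 - ε) / 2) * ∑' n : ℕ, (if b n then ((1 - ε) / 2) ^ n else 0)}

/-- The signed digit chosen at step `n`, given the current "remaining target" `t`. -/
noncomputable def gE (l : ℝ) (b1 : Bool) (t : ℝ) : ℕ → ℝ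
  | 0 => if b1 then -1 else 1
  | 1 => if b1 then 2 else -2
  | (N+2) => if l ^ (N + 3) / (1 - l) < t then 1
      else if t < -(l ^ (N + 3) / (1 - l)) then -1 else 0

/-- The remaining target after `N` steps: `gT N = -∑_{n<N} e_n l^n`. -/
noncomputable def gT (l : ℝ) (b1 : Bool) : ℕ → ℝ
  | 0 => 0
  | (N+1) => gT l b1 N - gE l b1 (gT l b1 N) N * l ^ N

lemma gT_partial (l : ℝ) (b1 : Bool) (N : ℕ) :
    ∑ n ∈ Finset.range N, gE l b1 (gT l b1 n) n * l ^ n = - gT l b1 N := by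
  induction N with
  | zero => simp [gT]
  | succ N ih =>
      rw [Finset.sum_range_succ, ih,
        show gT l b1 (N+1) = gT l b1 N - gE l b1 (gT l b1 N) N * l ^ N from rfl]
      ring

lemma gE_vals (l : ℝ) (b1 : Bool) (t : ℝ) (n : ℕ) :
    (gE l b1 t n = 1 ∨ gE l b1 t n = -1) ∨ gE l b1 t n = 0 ∨
      (gE l b1 t n = 2 ∧ b1 = true ∧ n = 1) ∨
      (gE l b1 t n = -2 ∧ b1 = false ∧ n = 1) := by
  match n with
  | 0 => cases b1 <;> simp [gE]
  | 1 => cases b1 <;> simp [gE]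
  | (N+2) => simp only [gE]; split_ifs <;> simp

lemma gT_bound (l : ℝ) (b1 : Bool) (hl1 : 24/49 ≤ l) (hl3 : 0 < 1 - 2*l)
    (hl2 : 1 - 2*l ≤ 1/49) :
    ∀ N, 2 ≤ N → |gT l b1 N| * (1 - l) ≤ l ^ N := by
  have hl0 : 0 < l := by linarith
  have h1l : 0 < 1 - l := by linarith
  intro N hN
  induction N, hN using Nat.le_induction with
  | base =>
      have e0 : |gT l b1 2| = 1 - 2*l := by
        cases b1
        · have h : gT l false 2 = 2*l - 1 := by simp [gT, gE]; try ring
          rw [h, abs_of_nonpos (by linarith)]; ring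
        · have h : gT l true 2 = 1 - 2*l := by simp [gT, gE]; try ring
          rw [h, abs_of_nonneg (by linarith)]
      rw [e0]
      nlinarith [sq_nonneg l]
  | succ N hN ih =>
      obtain ⟨M, rfl⟩ : ∃ M, N = M + 2 := ⟨N - 2, by omega⟩
      have hgt : gT l b1 (M+3)
          = gT l b1 (M+2) - gE l b1 (gT l b1 (M+2)) (M+2) * l ^ (M+2) := rfl
      set t := gT l b1 (M+2) with ht
      have hb' : |t * (1 - l)| ≤ l ^ (M+2) := by
        rw [abs_mul, abs_of_pos h1l]; exact ih
      obtain ⟨hb1', hb2'⟩ := abs_le.mp hb'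
      have hp : (0:ℝ) < l ^ (M+2) := pow_pos hl0 _
      have hpow : l ^ (M+3) = l * l ^ (M+2) := by ring
      have h3l : l ^ (M+2) ≤ 3 * l ^ (M+3) := by nlinarith
      rw [hgt]
      simp only [gE]
      have habsmul : ∀ u : ℝ, |u| * (1 - l) = |u * (1 - l)| := by
        intro u; rw [abs_mul, abs_of_pos h1l]
      split_ifs with h1 h2
      · rw [div_lt_iff₀ h1l] at h1
        rw [habsmul, abs_le]
        constructor <;> nlinarith
      · rw [← neg_div, lt_div_iff₀ h1l] at h2
        rw [habsmul, abs_le]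
        constructor <;> nlinarith
      · push_neg at h1 h2
        have h1' : t * (1 - l) ≤ l ^ (M+3) := by
          rw [le_div_iff₀ h1l] at h1; exact h1
        have h2' : -(l ^ (M+3)) ≤ t * (1 - l) := by
          rw [← neg_div, div_le_iff₀ h1l] at h2; linarith
        rw [habsmul, abs_le]
        constructor <;> nlinarith

theorem stmt4 (ε : ℝ) (hε0 : 0 < ε) (hε : ε ≤ 1 / 49)
    (a : ℝ) (ha : a ∈ middleCantor ε) :
    ∃ x ∈ middleCantor ε ∩ Set.Icc (0 : ℝ) 1, x ≠ a ∧
      (a + x) / 2 ∈ middleCantor ε := by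
  classical
  set l : ℝ := (1 - ε) / 2 with hldef
  have hl24 : 24/49 ≤ l := by rw [hldef]; linarith
  have hl0 : 0 < l := by linarith
  have hl2' : 0 < 1 - 2*l := by rw [hldef]; linarith
  have hε49 : 1 - 2*l ≤ 1/49 := by rw [hldef]; linarith
  have h1l : 0 < 1 - l := by linarith
  have hlt1 : l < 1 := by linarith
  obtain ⟨b, hab⟩ := ha
  rw [← hldef] at hab
  set b1 := b 1 with hb1
  set e : ℕ → ℝ := fun n => gE l b1 (gT l b1 n) n with he
  set d : ℕ → Bool := fun n => if e n = 1 ∨ e n = -1 then !(b n) else b n with hd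
  set c : ℕ → Bool := fun n => if e n = 0 then b n
      else if e n < 0 then true else false with hc
  have hev : ∀ n, (e n = 1 ∨ e n = -1) ∨ e n = 0 ∨
      (e n = 2 ∧ b1 = true ∧ n = 1) ∨ (e n = -2 ∧ b1 = false ∧ n = 1) :=
    fun n => gE_vals l b1 (gT l b1 n) n
  -- pointwise identity
  have key : ∀ n, (if b n then l^n else 0) + (if d n then l^n else 0)
      - 2*(if c n then l^n else 0) = e n * l^n := by
    intro n
    rcases hev n with (h | h) | h | ⟨h, hbt, hn⟩ | ⟨h, hbt, hn⟩
    · have hd' : d n = !(b n) := by norm_num [hd, h]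
      have hc' : c n = false := by norm_num [hc, h]
      rw [hd', hc', h]; cases b n <;> norm_num
    · have hd' : d n = !(b n) := by norm_num [hd, h]
      have hc' : c n = true := by norm_num [hc, h]
      rw [hd', hc', h]; cases b n <;> norm_num <;> ring
    · have hd' : d n = b n := by norm_num [hd, h]
      have hc' : c n = b n := by norm_num [hc, h]
      rw [hd', hc', h]; cases b n <;> norm_num <;> ring
    · subst hn
      have hbn : b 1 = true := by rw [← hb1]; exact hbt
      have hd' : d 1 = true := by norm_num [hd, h, hbn]
      have hc' : c 1 = false := by norm_num [hc, h]
      rw [hd', hc', h, hbn]; norm_num; all_goals ring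
    · subst hn
      have hbn : b 1 = false := by rw [← hb1]; exact hbt
      have hd' : d 1 = false := by norm_num [hd, h, hbn]
      have hc' : c 1 = true := by norm_num [hc, h]
      rw [hd', hc', h, hbn]; norm_num; all_goals ring
  -- summability
  have hgeo : Summable (fun n : ℕ => l ^ n) := summable_geometric_of_lt_one hl0.le hlt1
  have hpnn : ∀ n : ℕ, (0:ℝ) ≤ l ^ n := fun n => pow_nonneg hl0.le n
  have hSif : ∀ u : ℕ → Bool, Summable (fun n => if u n then l^n else 0) := by
    intro u
    refine Summable.of_nonneg_of_le (fun n => ?_) (fun n => ?_) hgeo <;>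
      split_ifs <;> first | exact le_rfl | exact hpnn n
  have heabs : ∀ n, |e n| ≤ 2 := by
    intro n
    rcases hev n with (h | h) | h | ⟨h, -, -⟩ | ⟨h, -, -⟩ <;> rw [h] <;> norm_num
  have hSe : Summable (fun n => e n * l ^ n) := by
    refine Summable.of_norm_bounded (hgeo.mul_left 2) (fun n => ?_)
    rw [norm_mul, Real.norm_eq_abs, Real.norm_eq_abs, abs_of_nonneg (hpnn n)]
    exact mul_le_mul_of_nonneg_right (heabs n) (hpnn n)
  -- the signed-digit sum vanishes
  have hts : ∑' n, e n * l ^ n = 0 := by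
    have hfun : (fun N => ∑ n ∈ Finset.range N, e n * l ^ n)
        = fun N => -gT l b1 N := funext (fun N => gT_partial l b1 N)
    have htend : Filter.Tendsto (fun N => ∑ n ∈ Finset.range N, e n * l ^ n)
        Filter.atTop (nhds 0) := by
      rw [hfun, show (0:ℝ) = -0 by norm_num]
      refine Filter.Tendsto.neg ?_
      apply squeeze_zero_norm' (a := fun N => l ^ N / (1 - l))
      · filter_upwards [Filter.eventually_atTop.2 ⟨2, fun N hN => hN⟩] with N hN
        rw [Real.norm_eq_abs, le_div_iff₀ h1l]
        exact gT_bound l b1 hl24 hl2' hε49 N hN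
      · have := (tendsto_pow_atTop_nhds_zero_of_lt_one hl0.le hlt1).div_const (1 - l)
        simpa using this
    exact tendsto_nhds_unique hSe.hasSum.tendsto_sum_nat htend
  set X : ℝ := (1 - l) * ∑' n, (if d n then l^n else 0) with hX
  have hsum_eq : (∑' n, (if b n then l^n else 0)) + (∑' n, (if d n then l^n else 0))
      - 2 * (∑' n, (if c n then l^n else 0)) = 0 := by
    have h1 : ∑' n, ((if b n then l^n else 0) + (if d n then l^n else 0)
        - 2*(if c n then l^n else 0)) = 0 := by
      rw [tsum_congr key, hts]
    rw [Summable.tsum_sub ((hSif b).add (hSif d)) ((hSif c).mul_left 2),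
      Summable.tsum_add (hSif b) (hSif d), tsum_mul_left] at h1
    exact h1
  refine ⟨X, ⟨⟨d, by rw [← hldef]⟩, ?_, ?_⟩, ?_, ⟨c, ?_⟩⟩
  · -- 0 ≤ X
    exact mul_nonneg h1l.le (tsum_nonneg fun n => by split_ifs <;>
      first | exact hpnn n | exact le_rfl)
  · -- X ≤ 1
    have hle : (∑' n, (if d n then l^n else 0)) ≤ ∑' n : ℕ, l ^ n :=
      Summable.tsum_le_tsum (fun n => by split_ifs <;> first | exact le_rfl | exact hpnn n)
        (hSif d) hgeo
    rw [tsum_geometric_of_lt_one hl0.le hlt1] at hle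
    calc X ≤ (1 - l) * (1 - l)⁻¹ := by
              exact mul_le_mul_of_nonneg_left hle h1l.le
      _ = 1 := mul_inv_cancel₀ (ne_of_gt h1l)
  · -- X ≠ a
    intro heq
    have hSd := hSif d
    have hSb := hSif b
    have hsd : (∑' n, (if d n then l^n else 0)) = ∑' n, (if b n then l^n else 0) := by
      have : (1 - l) * (∑' n, (if d n then l^n else 0))
          = (1 - l) * ∑' n, (if b n then l^n else 0) := by rw [← hX, ← hab, heq]
      exact mul_left_cancel₀ (ne_of_gt h1l) this
    set f : ℕ → ℝ := fun n => (if d n then l^n else 0) - (if b n then l^n else 0)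
      with hf
    have hSf : Summable f := hSd.sub hSb
    have h0 : ∑' n, f n = 0 := by
      rw [hf]; rw [Summable.tsum_sub hSd hSb, hsd, sub_self]
    rw [Summable.tsum_eq_zero_add hSf] at h0
    -- |f 0| = 1
    have he0 : e 0 = 1 ∨ e 0 = -1 := by
      rcases hev 0 with (h | h) | h | ⟨-, -, h⟩ | ⟨-, -, h⟩
      · exact Or.inl h
      · exact Or.inr h
      · exfalso
        have h2 : e 0 = if b1 then (-1:ℝ) else 1 := rfl
        rw [h] at h2
        split_ifs at h2 <;> norm_num at h2
      · exact absurd h one_ne_zero.symm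
      · exact absurd h one_ne_zero.symm
    have hd0 : d 0 = !(b 0) := by simp [hd, he0]
    have hf0 : |f 0| = 1 := by
      have hfv : f 0 = (if d 0 = true then (1:ℝ) else 0) - (if b 0 = true then 1 else 0) := by
        rw [hf]; norm_num
      rw [hfv, hd0]; cases b 0 <;> norm_num
    have htail : |∑' n, f (n+1)| ≤ l / (1 - l) := by
      have hbound : ∀ n : ℕ, ‖f (n+1)‖ ≤ l * l ^ n := by
        intro n
        have : l * l ^ n = l ^ (n+1) := by ring
        rw [this, hf, Real.norm_eq_abs]
        cases hdn : d (n+1) <;> cases hbn : b (n+1) <;>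
          simp [hdn, hbn, abs_of_nonneg (hpnn (n+1)), abs_neg, hpnn (n+1)]
      have hhs : HasSum (fun n : ℕ => l * l ^ n) (l * (1 - l)⁻¹) :=
        (hasSum_geometric_of_lt_one hl0.le hlt1).mul_left l
      have := tsum_of_norm_bounded hhs hbound
      rw [Real.norm_eq_abs] at this
      calc |∑' n, f (n+1)| ≤ l * (1-l)⁻¹ := this
        _ = l / (1 - l) := by rw [div_eq_mul_inv]
    have hlt : l / (1 - l) < 1 := by
      rw [div_lt_one h1l]; linarith
    have hfe : f 0 = -∑' n, f (n+1) := by linarith [h0]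
    have hone : (1:ℝ) ≤ l / (1 - l) :=
      calc (1:ℝ) = |f 0| := hf0.symm
        _ = |∑' n, f (n+1)| := by rw [hfe, abs_neg]
        _ ≤ l / (1 - l) := htail
    linarith
  · -- midpoint
    rw [← hldef]
    rw [hab, hX]
    linear_combination ((1 - l)/2) * hsum_eq
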